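/- For every multi-index α with |α| ≥ 1, the partial derivative D^α R(a) of the gluing length R(a) = e^{1/|a|} - e, at points 0 < |a| < 1, is a linear combination of terms of the form e^{1/|a|} · a^β / |a|^k with k ≤ 3|α| and |β| ≤ |α|. In particular there exists a constant C with |D^α R(a)| ≤ C·R(a)·(ln R(a))^{2|α|} for 0 < |a| < 1/2. -/

import Mathlib

/-- Partial derivative of `f : ℂ → ℝ` in the (real) direction `w`. -/
noncomputable def pdC (w : ℂ) (f : ℂ → ℝ) : ℂ → ℝ := fun a => fderiv ℝ f a w

/-- Iterated partial derivative `D^α = ∂_x^{α₁} ∂_y^{α₂}` for a multi-index `α`. -/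
noncomputable def DmixC (α : ℕ × ℕ) (f : ℂ → ℝ) : ℂ → ℝ :=
  (pdC 1)^[α.1] ((pdC Complex.I)^[α.2] f)

/-- The gluing length `R(a) = e^{1/|a|} - e`. -/
noncomputable def gluingLength (a : ℂ) : ℝ :=
  Real.exp (1 / ‖a‖) - Real.exp 1

/-- For every multi-index `α` with `|α| ≥ 1`, the derivative `D^α R(a)` is, on
`0 < |a| < 1`, a linear combination of terms `e^{1/|a|}·a^β/|a|^k` with
`k ≤ 3|α|` and `|β| ≤ |α|`; in particular `|D^α R(a)| ≤ C·R(a)·(ln R(a))^{2|α|}`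
for `0 < |a| < 1/2`. -/
abbrev Term2 := ℝ × ℕ × ℕ × ℕ
noncomputable def evalT (t : Term2) (a : ℂ) : ℝ :=
  t.1 * Real.exp (1 / ‖a‖) * a.re ^ t.2.1 * a.im ^ t.2.2.1 / ‖a‖ ^ t.2.2.2
noncomputable def evalL (L : List Term2) (a : ℂ) : ℝ := (L.map (evalT · a)).sum
def stepX : Term2 → List Term2
  | (c, b, e, k) => [(-c, b+1, e, k+3), (c*b, b-1, e, k), (-(c*k), b+1, e, k+2)]
def stepY : Term2 → List Term2
  | (c, b, e, k) => [(-c, b, e+1, k+3), (c*e, b, e-1, k), (-(c*k), b, e+1, k+2)]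

lemma hasFDerivAt_cabs {a : ℂ} (ha : a ≠ 0) :
    HasFDerivAt (fun z => ‖z‖)
      (‖a‖⁻¹ • (a.re • Complex.reCLM + a.im • Complex.imCLM)) a := by
  have hns : Complex.normSq a ≠ 0 := by simpa [Complex.normSq_eq_zero] using ha
  have hN : HasFDerivAt (fun z : ℂ => Complex.normSq z)
      ((a.re • Complex.reCLM + a.re • Complex.reCLM) + (a.im • Complex.imCLM + a.im • Complex.imCLM)) a := by
    have h1 : HasFDerivAt (fun z : ℂ => z.re * z.re)
        (a.re • Complex.reCLM + a.re • Complex.reCLM) a :=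
      (Complex.reCLM.hasFDerivAt (x := a)).mul (Complex.reCLM.hasFDerivAt (x := a))
    have h2 : HasFDerivAt (fun z : ℂ => z.im * z.im)
        (a.im • Complex.imCLM + a.im • Complex.imCLM) a :=
      (Complex.imCLM.hasFDerivAt (x := a)).mul (Complex.imCLM.hasFDerivAt (x := a))
    have := h1.add h2
    simpa [Complex.normSq_apply, Pi.add_def] using this
  have hs := (Real.hasDerivAt_sqrt hns).comp_hasFDerivAt a hN
  have habs : (fun z : ℂ => ‖z‖) = fun z => Real.sqrt (Complex.normSq z) := by
    funext z; rw [Complex.norm_def]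
  rw [habs]
  refine hs.congr_fderiv ?_
  have hsq : Real.sqrt (Complex.normSq a) = ‖a‖ := (Complex.norm_def a).symm
  rw [hsq]
  ext w
  have hr : ‖a‖ ≠ 0 := by simpa using ha
  simp [ContinuousLinearMap.smul_apply, ContinuousLinearMap.add_apply]
  field_simp
  ring

lemma evalT_deriv (t : Term2) {a : ℂ} (ha : a ≠ 0) :
    DifferentiableAt ℝ (evalT t) a ∧
    fderiv ℝ (evalT t) a 1 = evalL (stepX t) a ∧
    fderiv ℝ (evalT t) a Complex.I = evalL (stepY t) a := by
  obtain ⟨c, b, e, k⟩ := t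
  set r := ‖a‖ with hrdef
  have hr : r ≠ 0 := by simpa [hrdef] using ha
  set L := r⁻¹ • (a.re • Complex.reCLM + a.im • Complex.imCLM) with hLdef
  have hA : HasFDerivAt (fun z => ‖z‖) L a := hasFDerivAt_cabs ha
  have hinv : HasFDerivAt (fun z => ‖z‖⁻¹) ((-(r ^ 2)⁻¹) • L) a := by
    have := (hasDerivAt_inv hr).comp_hasFDerivAt a hA
    exact this
  have hexp : HasFDerivAt (fun z => Real.exp ‖z‖⁻¹)
      (Real.exp r⁻¹ • ((-(r ^ 2)⁻¹) • L)) a :=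
    (Real.hasDerivAt_exp _).comp_hasFDerivAt a hinv
  have hxb : HasFDerivAt (fun z : ℂ => z.re ^ b) ((b * a.re ^ (b - 1)) • Complex.reCLM) a :=
    (hasDerivAt_pow b a.re).comp_hasFDerivAt a (Complex.reCLM.hasFDerivAt (x := a))
  have hye : HasFDerivAt (fun z : ℂ => z.im ^ e) ((e * a.im ^ (e - 1)) • Complex.imCLM) a :=
    (hasDerivAt_pow e a.im).comp_hasFDerivAt a (Complex.imCLM.hasFDerivAt (x := a))
  have hpk : HasFDerivAt (fun z => (‖z‖ ^ k)⁻¹)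
      ((-(k * r ^ (k - 1)) / (r ^ k) ^ 2) • L) a := by
    have h1 : HasDerivAt (fun t : ℝ => (t ^ k)⁻¹) (-(k * r ^ (k - 1)) / (r ^ k) ^ 2) r :=
      (hasDerivAt_pow k r).inv (pow_ne_zero k hr)
    have := h1.comp_hasFDerivAt a hA
    exact this
  have H := (((hexp.const_mul c).fun_mul hxb).fun_mul hye).fun_mul hpk
  have hfun : evalT (c, b, e, k) =
      fun z => c * Real.exp ‖z‖⁻¹ * z.re ^ b * z.im ^ e * (‖z‖ ^ k)⁻¹ := by
    funext z; simp [evalT, div_eq_mul_inv, one_div]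
  rw [hfun]
  refine ⟨H.differentiableAt, ?_, ?_⟩
  · rw [H.fderiv]
    simp only [ContinuousLinearMap.add_apply, ContinuousLinearMap.smul_apply, hLdef,
      ContinuousLinearMap.coe_smul', Pi.smul_apply, Complex.reCLM_apply, Complex.imCLM_apply,
      Complex.one_re, Complex.one_im, smul_eq_mul, evalL, stepX, evalT, List.map_cons,
      List.map_nil, List.sum_cons, List.sum_nil, ← hrdef]
    rcases k with _ | k
    · push_cast
      field_simp
      ring
    · have : (k + 1 : ℕ) - 1 = k := rfl
      rw [this]
      push_cast
      field_simp
      ring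
  · rw [H.fderiv]
    simp only [ContinuousLinearMap.add_apply, ContinuousLinearMap.smul_apply, hLdef,
      ContinuousLinearMap.coe_smul', Pi.smul_apply, Complex.reCLM_apply, Complex.imCLM_apply,
      Complex.I_re, Complex.I_im, smul_eq_mul, evalL, stepY, evalT, List.map_cons,
      List.map_nil, List.sum_cons, List.sum_nil, ← hrdef]
    rcases k with _ | k
    · push_cast
      field_simp
      ring
    · have : (k + 1 : ℕ) - 1 = k := rfl
      rw [this]
      push_cast
      field_simp
      ring



lemma evalL_nil (a : ℂ) : evalL [] a = 0 := rfl
lemma evalL_cons (t : Term2) (L : List Term2) (a : ℂ) :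
    evalL (t :: L) a = evalT t a + evalL L a := by simp [evalL]
lemma evalL_append (L1 L2 : List Term2) (a : ℂ) :
    evalL (L1 ++ L2) a = evalL L1 a + evalL L2 a := by simp [evalL]

lemma evalL_deriv (L : List Term2) {a : ℂ} (ha : a ≠ 0) :
    DifferentiableAt ℝ (evalL L) a ∧
    fderiv ℝ (evalL L) a 1 = evalL (L.flatMap stepX) a ∧
    fderiv ℝ (evalL L) a Complex.I = evalL (L.flatMap stepY) a := by
  induction L with
  | nil =>
    have : evalL [] = fun _ : ℂ => (0:ℝ) := by funext z; rfl
    rw [this]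
    refine ⟨differentiableAt_const 0, ?_, ?_⟩ <;> simp [fderiv_const, evalL]
  | cons t L ih =>
    obtain ⟨hd, hx, hy⟩ := evalT_deriv t ha
    obtain ⟨ihd, ihx, ihy⟩ := ih
    have hfun : evalL (t :: L) = fun z => evalT t z + evalL L z := by
      funext z; exact evalL_cons t L z
    have hD : DifferentiableAt ℝ (evalL (t :: L)) a := by
      rw [hfun]; exact hd.add ihd
    refine ⟨hD, ?_, ?_⟩
    · rw [hfun, fderiv_fun_add hd ihd]
      simp only [ContinuousLinearMap.add_apply, hx, ihx, List.flatMap_cons, evalL_append]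
    · rw [hfun, fderiv_fun_add hd ihd]
      simp only [ContinuousLinearMap.add_apply, hy, ihy, List.flatMap_cons, evalL_append]

lemma pdC_rep {f : ℂ → ℝ} {L : List Term2} {d : ℝ}
    (h : ∀ a : ℂ, a ≠ 0 → f a = evalL L a + d) :
    ∀ a : ℂ, a ≠ 0 →
      pdC 1 f a = evalL (L.flatMap stepX) a ∧ pdC Complex.I f a = evalL (L.flatMap stepY) a := by
  intro a ha
  have hev : f =ᶠ[nhds a] (fun z => evalL L z + d) := by
    filter_upwards [IsOpen.mem_nhds isOpen_compl_singleton ha] with z hz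
    exact h z hz
  have hfd : fderiv ℝ f a = fderiv ℝ (fun z => evalL L z + d) a := hev.fderiv_eq
  obtain ⟨_, hx, hy⟩ := evalL_deriv L ha
  have hconst : fderiv ℝ (fun z => evalL L z + d) a = fderiv ℝ (evalL L) a :=
    fderiv_add_const d
  constructor
  · show fderiv ℝ f a 1 = _
    rw [hfd, hconst, hx]
  · show fderiv ℝ f a Complex.I = _
    rw [hfd, hconst, hy]

def Bnd (n : ℕ) (t : Term2) : Prop :=
  t.2.2.2 ≤ 3 * n ∧ t.2.1 + t.2.2.1 ≤ n ∧ t.2.2.2 ≤ t.2.1 + t.2.2.1 + 2 * n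

lemma stepX_bnd {n : ℕ} {t : Term2} (h : Bnd n t) : ∀ t' ∈ stepX t, Bnd (n + 1) t' := by
  obtain ⟨c, b, e, k⟩ := t
  simp only [Bnd] at h
  intro t' ht'
  simp only [stepX, List.mem_cons, List.not_mem_nil, or_false] at ht'
  rcases ht' with rfl | rfl | rfl <;> simp only [Bnd] <;> omega

lemma stepY_bnd {n : ℕ} {t : Term2} (h : Bnd n t) : ∀ t' ∈ stepY t, Bnd (n + 1) t' := by
  obtain ⟨c, b, e, k⟩ := t
  simp only [Bnd] at h
  intro t' ht'
  simp only [stepY, List.mem_cons, List.not_mem_nil, or_false] at ht'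
  rcases ht' with rfl | rfl | rfl <;> simp only [Bnd] <;> omega

def RepL (f : ℂ → ℝ) (n : ℕ) : Prop :=
  ∃ L : List Term2, (∀ t ∈ L, Bnd n t) ∧ ∀ a : ℂ, a ≠ 0 → f a = evalL L a

lemma RepL.pdX {f : ℂ → ℝ} {n : ℕ} (h : RepL f n) : RepL (pdC 1 f) (n + 1) := by
  obtain ⟨L, hB, hrep⟩ := h
  refine ⟨L.flatMap stepX, ?_, fun a ha => ?_⟩
  · intro t' ht'
    rw [List.mem_flatMap] at ht'
    obtain ⟨t, ht, ht'⟩ := ht'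
    exact stepX_bnd (hB t ht) t' ht'
  · exact (pdC_rep (d := 0) (fun a ha => by rw [hrep a ha, add_zero]) a ha).1

lemma RepL.pdY {f : ℂ → ℝ} {n : ℕ} (h : RepL f n) : RepL (pdC Complex.I f) (n + 1) := by
  obtain ⟨L, hB, hrep⟩ := h
  refine ⟨L.flatMap stepY, ?_, fun a ha => ?_⟩
  · intro t' ht'
    rw [List.mem_flatMap] at ht'
    obtain ⟨t, ht, ht'⟩ := ht'
    exact stepY_bnd (hB t ht) t' ht'
  · exact (pdC_rep (d := 0) (fun a ha => by rw [hrep a ha, add_zero]) a ha).2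

lemma gluing_rep : ∀ a : ℂ, a ≠ 0 →
    gluingLength a = evalL [((1:ℝ), 0, 0, 0)] a + (-Real.exp 1) := by
  intro a ha
  simp [gluingLength, evalL, evalT, sub_eq_add_neg]

lemma gluing_pdX : RepL (pdC 1 gluingLength) 1 := by
  refine ⟨[((1:ℝ), 0, 0, 0)].flatMap stepX, ?_, fun a ha => ?_⟩
  · intro t' ht'
    simp only [List.flatMap_cons, List.flatMap_nil, List.append_nil, stepX,
      List.mem_cons, List.not_mem_nil, or_false] at ht'
    rcases ht' with rfl | rfl | rfl <;> simp [Bnd]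
  · exact (pdC_rep gluing_rep a ha).1

lemma gluing_pdY : RepL (pdC Complex.I gluingLength) 1 := by
  refine ⟨[((1:ℝ), 0, 0, 0)].flatMap stepY, ?_, fun a ha => ?_⟩
  · intro t' ht'
    simp only [List.flatMap_cons, List.flatMap_nil, List.append_nil, stepY,
      List.mem_cons, List.not_mem_nil, or_false] at ht'
    rcases ht' with rfl | rfl | rfl <;> simp [Bnd]
  · exact (pdC_rep gluing_rep a ha).2

lemma RepL.iterX {f : ℂ → ℝ} {n : ℕ} (h : RepL f n) (m : ℕ) : RepL ((pdC 1)^[m] f) (n + m) := by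
  induction m with
  | zero => simpa using h
  | succ m ih =>
    rw [Function.iterate_succ_apply']
    have h2 := ih.pdX
    have h3 : n + m + 1 = n + (m + 1) := by omega
    rwa [h3] at h2

lemma RepL.iterY {f : ℂ → ℝ} {n : ℕ} (h : RepL f n) (m : ℕ) :
    RepL ((pdC Complex.I)^[m] f) (n + m) := by
  induction m with
  | zero => simpa using h
  | succ m ih =>
    rw [Function.iterate_succ_apply']
    have h2 := ih.pdY
    have h3 : n + m + 1 = n + (m + 1) := by omega
    rwa [h3] at h2

lemma DmixC_rep (α : ℕ × ℕ) (hα : 1 ≤ α.1 + α.2) :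
    RepL (DmixC α gluingLength) (α.1 + α.2) := by
  obtain ⟨i, j⟩ := α
  rcases j with _ | j
  · -- j = 0, i ≥ 1
    rcases i with _ | i
    · omega
    · have h := gluing_pdX.iterX i
      have : DmixC (i + 1, 0) gluingLength = (pdC 1)^[i] (pdC 1 gluingLength) := by
        simp [DmixC, Function.iterate_succ_apply]
      rw [this]
      simpa [Nat.add_comm] using h
  · have h0 := gluing_pdY.iterY j
    have h := h0.iterX i
    have : DmixC (i, j + 1) gluingLength = (pdC 1)^[i] ((pdC Complex.I)^[j] (pdC Complex.I gluingLength)) := by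
      simp [DmixC, Function.iterate_succ_apply]
    rw [this]
    have harith : 1 + j + i = i + (j + 1) := by omega
    rwa [harith] at h

lemma list_sum_fin {β : Type*} [AddCommMonoid β] (L : List Term2) (f : Term2 → β) :
    (L.map f).sum = ∑ j : Fin L.length, f (L.get j) := by
  induction L with
  | nil => simp
  | cons t L ih =>
    have hc : ∑ j : Fin (t :: L).length, f ((t :: L).get j)
        = ∑ j : Fin (L.length + 1), f ((t :: L).get j) := rfl
    rw [List.map_cons, List.sum_cons, ih, hc, Fin.sum_univ_succ]
    rfl

lemma evalT_bound {n : ℕ} {t : Term2} (h : Bnd n t) {a : ℂ}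
    (h0 : 0 < ‖a‖) (h1 : ‖a‖ < 1) :
    |evalT t a| ≤ |t.1| * (Real.exp (1 / ‖a‖) / ‖a‖ ^ (2 * n)) := by
  obtain ⟨c, b, e, k⟩ := t
  simp only [Bnd] at h
  obtain ⟨hk, hbe, hkd⟩ := h
  set r := ‖a‖ with hrdef
  have hE : 0 < Real.exp (1 / r) := Real.exp_pos _
  have habs : |evalT (c, b, e, k) a| = |c| * Real.exp (1 / r) * |a.re| ^ b * |a.im| ^ e / r ^ k := by
    have hrfl : evalT (c, b, e, k) a = c * Real.exp (1 / r) * a.re ^ b * a.im ^ e / r ^ k := rfl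
    rw [hrfl, abs_div, abs_mul, abs_mul, abs_mul, _root_.abs_pow, _root_.abs_pow,
      _root_.abs_pow, abs_of_pos hE, abs_of_pos h0]
  rw [habs]
  have hxr : |a.re| ≤ r := Complex.abs_re_le_norm a
  have hyr : |a.im| ≤ r := Complex.abs_im_le_norm a
  have key : |a.re| ^ b * |a.im| ^ e / r ^ k ≤ 1 / r ^ (2 * n) := by
    have h2 : |a.re| ^ b * |a.im| ^ e ≤ r ^ (b + e) := by
      rw [pow_add]
      exact mul_le_mul (pow_le_pow_left₀ (abs_nonneg _) hxr b)
        (pow_le_pow_left₀ (abs_nonneg _) hyr e) (by positivity) (by positivity)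
    have h3 : r ^ (b + e + 2 * n) ≤ r ^ k := pow_le_pow_of_le_one h0.le h1.le hkd
    have hrk : (0:ℝ) < r ^ k := pow_pos h0 k
    calc |a.re| ^ b * |a.im| ^ e / r ^ k ≤ r ^ (b + e) / r ^ k :=
          div_le_div_of_nonneg_right h2 hrk.le
      _ ≤ r ^ (b + e) / r ^ (b + e + 2 * n) :=
          div_le_div_of_nonneg_left (by positivity) (pow_pos h0 _) h3
      _ = 1 / r ^ (2 * n) := by
          rw [div_eq_div_iff (by positivity) (by positivity), one_mul, ← pow_add]
  calc |c| * Real.exp (1 / r) * |a.re| ^ b * |a.im| ^ e / r ^ k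
      = (|c| * Real.exp (1 / r)) * (|a.re| ^ b * |a.im| ^ e / r ^ k) := by ring
    _ ≤ (|c| * Real.exp (1 / r)) * (1 / r ^ (2 * n)) := by
        exact mul_le_mul_of_nonneg_left key (by positivity)
    _ = |c| * (Real.exp (1 / r) / r ^ (2 * n)) := by ring

lemma evalL_bound {n : ℕ} {L : List Term2} (hB : ∀ t ∈ L, Bnd n t) {a : ℂ}
    (h0 : 0 < ‖a‖) (h1 : ‖a‖ < 1) :
    |evalL L a| ≤ (L.map (fun t => |t.1|)).sum * (Real.exp (1 / ‖a‖) / ‖a‖ ^ (2 * n)) := by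
  induction L with
  | nil => simp [evalL]
  | cons t L ih =>
    rw [evalL_cons]
    calc |evalT t a + evalL L a| ≤ |evalT t a| + |evalL L a| := abs_add_le _ _
      _ ≤ |t.1| * (Real.exp (1 / ‖a‖) / ‖a‖ ^ (2 * n)) +
          (L.map (fun t => |t.1|)).sum * (Real.exp (1 / ‖a‖) / ‖a‖ ^ (2 * n)) :=
        add_le_add (evalT_bound (hB t (List.mem_cons_self)) h0 h1)
          (ih fun t' ht' => hB t' (List.mem_cons_of_mem t ht'))
      _ = ((t :: L).map (fun t => |t.1|)).sum * (Real.exp (1 / ‖a‖) / ‖a‖ ^ (2 * n)) := by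
        simp [add_mul]

lemma key_bound (n : ℕ) {r : ℝ} (h0 : 0 < r) (h2 : r < 1 / 2) :
    Real.exp (1 / r) / r ^ (2 * n) ≤
      2 ^ (2 * n + 1) * (Real.exp (1 / r) - Real.exp 1) *
        Real.log (Real.exp (1 / r) - Real.exp 1) ^ (2 * n) := by
  set R := Real.exp (1 / r) - Real.exp 1 with hRdef
  have h2r : 2 < 1 / r := by
    rw [lt_div_iff₀ h0]; linarith
  have he2 : Real.exp 1 * 2 ≤ Real.exp (1 / r) := by
    have h1 : Real.exp 1 * 2 ≤ Real.exp 1 * Real.exp 1 := by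
      nlinarith [Real.exp_one_gt_d9, Real.exp_pos 1]
    calc Real.exp 1 * 2 ≤ Real.exp 1 * Real.exp 1 := h1
      _ = Real.exp 2 := by rw [← Real.exp_add]; norm_num
      _ ≤ Real.exp (1 / r) := Real.exp_le_exp.2 h2r.le
  have hR : Real.exp (1 / r) / 2 ≤ R := by rw [hRdef]; linarith
  have hRpos : 0 < R := lt_of_lt_of_le (by positivity) hR
  have hlog2 : Real.log 2 ≤ 1 := by
    have := Real.log_two_lt_d9
    linarith
  have hinv2 : 1 ≤ 1 / (2 * r) := by
    rw [le_div_iff₀ (by positivity)]; linarith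
  have hsum : 1 / r = 1 / (2 * r) + 1 / (2 * r) := by
    field_simp; ring
  have hlogR : 1 / (2 * r) ≤ Real.log R := by
    have hmono : Real.log (Real.exp (1 / r) / 2) ≤ Real.log R :=
      Real.log_le_log (by positivity) hR
    have heq : Real.log (Real.exp (1 / r) / 2) = 1 / r - Real.log 2 := by
      rw [Real.log_div (by positivity) (by norm_num), Real.log_exp]
    linarith
  have hpow : (1 / (2 * r)) ^ (2 * n) ≤ Real.log R ^ (2 * n) :=
    pow_le_pow_left₀ (by positivity) hlogR _
  have main : Real.exp (1 / r) / 2 * (1 / (2 * r)) ^ (2 * n) ≤ R * Real.log R ^ (2 * n) :=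
    mul_le_mul hR hpow (by positivity) hRpos.le
  have hid : 2 ^ (2 * n + 1) * (Real.exp (1 / r) / 2 * (1 / (2 * r)) ^ (2 * n)) =
      Real.exp (1 / r) / r ^ (2 * n) := by
    rw [div_pow, one_pow, mul_pow, pow_succ]
    field_simp
  calc Real.exp (1 / r) / r ^ (2 * n)
      = 2 ^ (2 * n + 1) * (Real.exp (1 / r) / 2 * (1 / (2 * r)) ^ (2 * n)) := hid.symm
    _ ≤ 2 ^ (2 * n + 1) * (R * Real.log R ^ (2 * n)) :=
        mul_le_mul_of_nonneg_left main (by positivity)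
    _ = 2 ^ (2 * n + 1) * R * Real.log R ^ (2 * n) := by ring

theorem stmt2 (α : ℕ × ℕ) (hα : 1 ≤ α.1 + α.2) :
    (∃ (n : ℕ) (c : Fin n → ℝ) (k : Fin n → ℕ) (β : Fin n → ℕ × ℕ),
      (∀ j, k j ≤ 3 * (α.1 + α.2) ∧ (β j).1 + (β j).2 ≤ α.1 + α.2) ∧
      ∀ a : ℂ, 0 < ‖a‖ → ‖a‖ < 1 →
        DmixC α gluingLength a =
          ∑ j : Fin n, c j * Real.exp (1 / ‖a‖) *
            a.re ^ (β j).1 * a.im ^ (β j).2 / ‖a‖ ^ k j) ∧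
    ∃ C : ℝ, ∀ a : ℂ, 0 < ‖a‖ → ‖a‖ < 1 / 2 →
      |DmixC α gluingLength a| ≤
        C * gluingLength a * Real.log (gluingLength a) ^ (2 * (α.1 + α.2)) := by
  obtain ⟨L, hB, hrep⟩ := DmixC_rep α hα
  constructor
  · refine ⟨L.length, fun j => (L.get j).1, fun j => (L.get j).2.2.2,
      fun j => ((L.get j).2.1, (L.get j).2.2.1), fun j => ?_, fun a h0 h1 => ?_⟩
    · obtain ⟨hk, hbe, _⟩ := hB (L.get j) (List.get_mem L j)
      exact ⟨hk, hbe⟩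
    · have ha : a ≠ 0 := by
        intro h; rw [h] at h0; simp at h0
      rw [hrep a ha, evalL, list_sum_fin]
      exact Finset.sum_congr rfl fun j _ => rfl
  · refine ⟨(L.map (fun t => |t.1|)).sum * 2 ^ (2 * (α.1 + α.2) + 1), fun a h0 h2 => ?_⟩
    have ha : a ≠ 0 := by
      intro h; rw [h] at h0; simp at h0
    have h1 : ‖a‖ < 1 := by linarith
    have hb := evalL_bound hB h0 h1
    have hkb := key_bound (α.1 + α.2) h0 h2
    have hS : 0 ≤ (L.map (fun t => |t.1|)).sum := by
      apply List.sum_nonneg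
      intro x hx
      rw [List.mem_map] at hx
      obtain ⟨t, _, rfl⟩ := hx
      exact abs_nonneg _
    have hglu : gluingLength a = Real.exp (1 / ‖a‖) - Real.exp 1 := rfl
    rw [hrep a ha, hglu]
    calc |evalL L a|
        ≤ (L.map (fun t => |t.1|)).sum *
          (Real.exp (1 / ‖a‖) / ‖a‖ ^ (2 * (α.1 + α.2))) := hb
      _ ≤ (L.map (fun t => |t.1|)).sum *
          (2 ^ (2 * (α.1 + α.2) + 1) * (Real.exp (1 / ‖a‖) - Real.exp 1) *
            Real.log (Real.exp (1 / ‖a‖) - Real.exp 1) ^ (2 * (α.1 + α.2))) :=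
          mul_le_mul_of_nonneg_left hkb hS
      _ = (L.map (fun t => |t.1|)).sum * 2 ^ (2 * (α.1 + α.2) + 1) *
          (Real.exp (1 / ‖a‖) - Real.exp 1) *
          Real.log (Real.exp (1 / ‖a‖) - Real.exp 1) ^ (2 * (α.1 + α.2)) := by
        ring
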